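/- arXiv:2302.14006 — 2 statements merged into one kernel-verified Lean document; each statement's English description precedes it below -/
import Mathlib

section
/- Any regular multigraph of degree 4 admits a 2-coloring of its edges (colors 'left' and 'right') such that every vertex is incident to exactly two edges of each color. -/
/-- A multigraph: each edge has an ordered pair of endpoints (unordered in
spirit; adjacency and walks below are symmetrized). Parallel edges and loops
are allowed. -/
structure Multigraph (V E : Type*) where
  ends : E → V × V

namespace Multigraph

variable {V E : Type*}

/-- The number of incidences of edge `e` at vertex `v` (a loop counts twice). -/
def count [DecidableEq V] (G : Multigraph V E) (e : E) (v : V) : ℕ :=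
  (if (G.ends e).1 = v then 1 else 0) + (if (G.ends e).2 = v then 1 else 0)

/-- The degree of a vertex. -/
def degree [DecidableEq V] [Fintype E] (G : Multigraph V E) (v : V) : ℕ :=
  ∑ e, G.count e v



end Multigraph

/-- Any 4-regular multigraph admits a 2-coloring of its edges such that every
vertex is incident to exactly two edges of each color. -/
theorem four_regular_balanced_two_coloring
    {V E : Type*} [Fintype V] [Fintype E] [DecidableEq V]
    (G : Multigraph V E) (hreg : ∀ v, G.degree v = 4) :
    ∃ c : E → Bool, ∀ v : V,
      (∑ e, if c e then G.count e v else 0) = 2 ∧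
      (∑ e, if c e then 0 else G.count e v) = 2 := by
  classical
  -- every edge contributes total incidence 2
  have hcount2 : ∀ e : E, ∑ v, G.count e v = 2 := by
    intro e
    unfold Multigraph.count
    rw [Finset.sum_add_distrib, Finset.sum_ite_eq, Finset.sum_ite_eq]
    simp
  -- 2 |E| = 4 |V|
  have hE : 2 * Fintype.card E = 4 * Fintype.card V := by
    have h1 : ∑ v : V, G.degree v = 4 * Fintype.card V := by
      simp [hreg, Finset.sum_const, mul_comm]
    have h2 : ∑ v : V, G.degree v = 2 * Fintype.card E := by
      unfold Multigraph.degree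
      rw [Finset.sum_comm]
      simp [hcount2, Finset.sum_const, mul_comm]
    omega
  -- Hall #1 : choose a source slot for each edge
  set t : E → Finset (V × Fin 2) :=
    fun e => ({(G.ends e).1, (G.ends e).2} : Finset V) ×ˢ (Finset.univ : Finset (Fin 2)) with ht
  have hall1 : ∀ s : Finset E, s.card ≤ (s.biUnion t).card := by
    intro s
    set W : Finset V := s.biUnion (fun e => {(G.ends e).1, (G.ends e).2}) with hW
    have hbi : s.biUnion t = W ×ˢ (Finset.univ : Finset (Fin 2)) := by
      ext x
      simp [ht, hW, Finset.mem_biUnion, Finset.mem_product]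
    have hcardW : (s.biUnion t).card = 2 * W.card := by
      rw [hbi, Finset.card_product]
      simp [mul_comm]
    -- counting
    have hinner : ∀ e ∈ s, ∑ v ∈ W, G.count e v = 2 := by
      intro e he
      have h1 : (G.ends e).1 ∈ W := by
        simp [hW, Finset.mem_biUnion]
        exact ⟨e, he, Or.inl rfl⟩
      have h2 : (G.ends e).2 ∈ W := by
        simp [hW, Finset.mem_biUnion]
        exact ⟨e, he, Or.inr rfl⟩
      unfold Multigraph.count
      rw [Finset.sum_add_distrib, Finset.sum_ite_eq, Finset.sum_ite_eq]
      simp [h1, h2]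
    have hle : ∑ e ∈ s, ∑ v ∈ W, G.count e v ≤ ∑ e : E, ∑ v ∈ W, G.count e v :=
      Finset.sum_le_sum_of_subset (Finset.subset_univ s)
    have hlhs : ∑ e ∈ s, ∑ v ∈ W, G.count e v = 2 * s.card := by
      rw [Finset.sum_congr rfl hinner]
      simp [mul_comm]
    have hrhs : ∑ e : E, ∑ v ∈ W, G.count e v = 4 * W.card := by
      rw [Finset.sum_comm]
      have : ∀ v ∈ W, ∑ e : E, G.count e v = 4 := fun v _ => hreg v
      rw [Finset.sum_congr rfl this]
      simp [mul_comm]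
    omega
  obtain ⟨g, hginj, hgmem⟩ := (Finset.all_card_le_biUnion_card_iff_exists_injective t).mp hall1
  set src : E → V := fun e => (g e).1 with hsrcdef
  have hsrcends : ∀ e, src e = (G.ends e).1 ∨ src e = (G.ends e).2 := by
    intro e
    have := hgmem e
    simp [ht, Finset.mem_product] at this
    tauto
  -- each source fiber has at most 2 elements
  have hfible : ∀ v : V, (Finset.univ.filter (fun e => src e = v)).card ≤ 2 := by
    intro v
    have : (Finset.univ.filter (fun e => src e = v)).card ≤
        (({v} : Finset V) ×ˢ (Finset.univ : Finset (Fin 2))).card := by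
      apply Finset.card_le_card_of_injOn g
      · intro e he
        simp at he
        exact Finset.mem_product.mpr ⟨Finset.mem_singleton.mpr he, Finset.mem_univ _⟩
      · exact fun a _ b _ h => hginj h
    simpa using this
  have hfibsum : ∑ v : V, (Finset.univ.filter (fun e => src e = v)).card =
      Fintype.card E := by
    have : ∀ v : V, (Finset.univ.filter (fun e => src e = v)).card =
        ∑ e : E, if src e = v then 1 else 0 := by
      intro v; rw [Finset.card_filter]
    rw [Finset.sum_congr rfl (fun v _ => this v), Finset.sum_comm]
    have hin : ∀ e : E, ∑ v : V, (if src e = v then 1 else 0) = 1 := by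
      intro e; rw [Finset.sum_ite_eq]; simp
    rw [Finset.sum_congr rfl (fun e _ => hin e)]
    simp
  have hsrcfib : ∀ v : V, (Finset.univ.filter (fun e => src e = v)).card = 2 := by
    by_contra hcon
    push_neg at hcon
    obtain ⟨v0, hv0⟩ := hcon
    have hlt : (Finset.univ.filter (fun e => src e = v0)).card < 2 :=
      lt_of_le_of_ne (hfible v0) hv0
    have : ∑ v : V, (Finset.univ.filter (fun e => src e = v)).card <
        ∑ v : V, 2 := by
      apply Finset.sum_lt_sum (fun v _ => hfible v) ⟨v0, Finset.mem_univ v0, hlt⟩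
    simp [Finset.sum_const] at this
    omega
  -- the destination
  set dst : E → V := fun e => if src e = (G.ends e).1 then (G.ends e).2 else (G.ends e).1
    with hdstdef
  have hsplit : ∀ (e : E) (v : V),
      G.count e v = (if src e = v then 1 else 0) + (if dst e = v then 1 else 0) := by
    intro e v
    unfold Multigraph.count
    by_cases h1 : src e = (G.ends e).1
    · have hd : dst e = (G.ends e).2 := if_pos h1
      rw [h1, hd]
    · have h2 : src e = (G.ends e).2 := (hsrcends e).resolve_left h1
      have hd : dst e = (G.ends e).1 := if_neg h1
      rw [h2, hd]
      exact add_comm _ _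
  have hdstfib : ∀ v : V, (Finset.univ.filter (fun e => dst e = v)).card = 2 := by
    intro v
    have h4 : (4 : ℕ) = ∑ e : E, G.count e v := (hreg v).symm.trans rfl
    have : ∑ e : E, G.count e v =
        (Finset.univ.filter (fun e => src e = v)).card +
        (Finset.univ.filter (fun e => dst e = v)).card := by
      rw [Finset.card_filter, Finset.card_filter, ← Finset.sum_add_distrib]
      exact Finset.sum_congr rfl (fun e _ => hsplit e v)
    rw [hsrcfib v] at this
    omega
  -- Hall #2 : system of distinct representatives among targets
  set t' : V → Finset V := fun v => (Finset.univ.filter (fun e => src e = v)).image dst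
    with ht'
  have hall2 : ∀ s : Finset V, s.card ≤ (s.biUnion t').card := by
    intro s
    set N : Finset V := s.biUnion t' with hN
    have hsub : Finset.univ.filter (fun e => src e ∈ s) ⊆
        Finset.univ.filter (fun e => dst e ∈ N) := by
      intro e he
      simp at he
      simp [hN, Finset.mem_biUnion]
      exact ⟨src e, he, by simp [ht', Finset.mem_image]; exact ⟨e, rfl, rfl⟩⟩
    have hcards : (Finset.univ.filter (fun e => src e ∈ s)).card = 2 * s.card := by
      rw [Finset.card_filter]
      have : ∀ e : E, (if src e ∈ s then 1 else 0) =
          ∑ v ∈ s, if src e = v then 1 else 0 := by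
        intro e; rw [Finset.sum_ite_eq]
      rw [Finset.sum_congr rfl (fun e _ => this e), Finset.sum_comm]
      have : ∀ v ∈ s, ∑ e : E, (if src e = v then 1 else 0) = 2 := by
        intro v _
        rw [← Finset.card_filter]
        exact hsrcfib v
      rw [Finset.sum_congr rfl this]
      simp [mul_comm]
    have hcardd : (Finset.univ.filter (fun e => dst e ∈ N)).card = 2 * N.card := by
      rw [Finset.card_filter]
      have : ∀ e : E, (if dst e ∈ N then 1 else 0) =
          ∑ v ∈ N, if dst e = v then 1 else 0 := by
        intro e; rw [Finset.sum_ite_eq]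
      rw [Finset.sum_congr rfl (fun e _ => this e), Finset.sum_comm]
      have : ∀ v ∈ N, ∑ e : E, (if dst e = v then 1 else 0) = 2 := by
        intro v _
        rw [← Finset.card_filter]
        exact hdstfib v
      rw [Finset.sum_congr rfl this]
      simp [mul_comm]
    have := Finset.card_le_card hsub
    omega
  obtain ⟨f, hfinj, hfmem⟩ := (Finset.all_card_le_biUnion_card_iff_exists_injective t').mp hall2
  have hch : ∀ v : V, ∃ e : E, src e = v ∧ dst e = f v := by
    intro v
    have := hfmem v
    simp [ht', Finset.mem_image] at this
    obtain ⟨e, he1, he2⟩ := this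
    exact ⟨e, he1, he2⟩
  choose ch hchsrc hchdst using hch
  have hfsurj : Function.Surjective f := Finite.surjective_of_injective hfinj
  refine ⟨fun e => decide (∃ v, ch v = e), fun v => ?_⟩
  set c : E → Bool := fun e => decide (∃ v, ch v = e) with hc
  -- the true-color sum
  have hsrcsum : ∑ e : E, (if c e then (if src e = v then 1 else 0) else 0) = 1 := by
    have : ∀ e : E, (if c e then (if src e = v then 1 else 0) else 0) =
        (if ch v = e then 1 else 0) := by
      intro e
      by_cases hev : ch v = e
      · subst hev
        simp [hc, hchsrc]
      · by_cases hce : c e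
        · obtain ⟨u, hu⟩ : ∃ u, ch u = e := by simpa [hc] using hce
          have hsu : src e = u := by rw [← hu, hchsrc u]
          have hne : src e ≠ v := by
            intro hsv
            exact hev (by rw [← hu]; congr 1; rw [← hsu, hsv])
          simp [hce, hev, hne]
        · simp [hce, hev]
    rw [Finset.sum_congr rfl (fun e _ => this e), Finset.sum_ite_eq]
    simp
  -- the dst part
  obtain ⟨u0, hu0⟩ := hfsurj v
  have hdstsum : ∑ e : E, (if c e then (if dst e = v then 1 else 0) else 0) = 1 := by
    have : ∀ e : E, (if c e then (if dst e = v then 1 else 0) else 0) =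
        (if ch u0 = e then 1 else 0) := by
      intro e
      by_cases hev : ch u0 = e
      · subst hev
        have : c (ch u0) = true := by simp [hc]
        simp [this, hchdst u0, hu0]
      · by_cases hce : c e
        · obtain ⟨u, hu⟩ : ∃ u, ch u = e := by simpa [hc] using hce
          have hdu : dst e = f u := by rw [← hu, hchdst u]
          have hne : dst e ≠ v := by
            intro hdv
            have : f u = f u0 := by rw [← hdu, hdv, hu0]
            exact hev (by rw [← hu]; congr 1; exact (hfinj this).symm)
          simp [hce, hev, hne]
        · simp [hce, hev]
    rw [Finset.sum_congr rfl (fun e _ => this e), Finset.sum_ite_eq]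
    simp
  have htrue : ∑ e : E, (if c e then G.count e v else 0) = 2 := by
    have : ∀ e : E, (if c e then G.count e v else 0) =
        (if c e then (if src e = v then 1 else 0) else 0) +
        (if c e then (if dst e = v then 1 else 0) else 0) := by
      intro e
      by_cases hce : c e <;> simp [hce, hsplit e v]
    rw [Finset.sum_congr rfl (fun e _ => this e), Finset.sum_add_distrib,
      hsrcsum, hdstsum]
  refine ⟨htrue, ?_⟩
  have hall : ∑ e : E, ((if c e then G.count e v else 0) + (if c e then 0 else G.count e v))
      = 4 := by
    have : ∀ e : E, (if c e then G.count e v else 0) + (if c e then 0 else G.count e v)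
        = G.count e v := by
      intro e; by_cases hce : c e <;> simp [hce]
    rw [Finset.sum_congr rfl (fun e _ => this e)]
    exact hreg v
  rw [Finset.sum_add_distrib, htrue] at hall
  omega
end

section
/- (Generalized von Neumann trace inequality, Fan) For square complex matrices A₁,…,A_m and unitary matrices U₁,…,U_m of the same size n, |Tr(A₁U₁A₂U₂···A_mU_m)| ≤ Σ_{i=1}^n σ_i(A₁)σ_i(A₂)···σ_i(A_m), where σ₁(A) ≥ σ₂(A) ≥ ··· are the singular values of A in decreasing order. -/
open Matrix ComplexOrder

/-- The singular values of a complex square matrix, as a function `Fin n → ℝ`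
(in the order given by the eigenvalues of `AᴴA`, not yet sorted). -/
noncomputable def singValues {n : ℕ} (A : Matrix (Fin n) (Fin n) ℂ) :
    Fin n → ℝ :=
  fun i => Real.sqrt ((Matrix.posSemidef_conjTranspose_mul_self A).1.eigenvalues i)

variable {n : ℕ}

local notation "⟪" x ", " y "⟫" => @inner ℂ _ _ x y




/-- `M` is an L²-contraction. -/
def IsContr (M : Matrix (Fin n) (Fin n) ℂ) : Prop :=
  ∀ x : Fin n → ℂ, ∑ i, Complex.normSq (M.mulVec x i) ≤ ∑ i, Complex.normSq (x i)

lemma IsContr.mul {M N : Matrix (Fin n) (Fin n) ℂ} (hM : IsContr M) (hN : IsContr N) :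
    IsContr (M * N) := by
  intro x
  rw [← Matrix.mulVec_mulVec]
  exact (hM _).trans (hN x)

lemma isContr_one : IsContr (1 : Matrix (Fin n) (Fin n) ℂ) := by
  intro x; rw [Matrix.one_mulVec]

lemma sum_normSq_eq (y : Fin n → ℂ) :
    (∑ i, Complex.normSq (y i) : ℝ) = (star y ⬝ᵥ y).re := by
  simp [dotProduct, ← Complex.normSq_eq_conj_mul_self, Complex.re_sum]

lemma IsContr.of_unitary {M : Matrix (Fin n) (Fin n) ℂ}
    (hM : M ∈ Matrix.unitaryGroup (Fin n) ℂ) : IsContr M := by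
  intro x
  have h1 : Mᴴ * M = 1 := (Matrix.mem_unitaryGroup_iff'.mp hM)
  have key : star (M *ᵥ x) ⬝ᵥ (M *ᵥ x) = star x ⬝ᵥ x := by
    rw [Matrix.star_mulVec, ← Matrix.dotProduct_mulVec, Matrix.mulVec_mulVec, h1,
      Matrix.one_mulVec]
  rw [sum_normSq_eq, sum_normSq_eq, key]

lemma IsContr.prod {l : List (Matrix (Fin n) (Fin n) ℂ)} (h : ∀ M ∈ l, IsContr M) :
    IsContr l.prod := by
  induction l with
  | nil => exact isContr_one
  | cons a t ih =>
    rw [List.prod_cons]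
    exact (h a (by simp)).mul (ih fun M hM => h M (by simp [hM]))

lemma IsContr.diag_abs_le {M : Matrix (Fin n) (Fin n) ℂ} (hM : IsContr M) (i : Fin n) :
    ‖M i i‖ ≤ 1 := by
  have h := hM (Pi.single i 1)
  have h1 : M.mulVec (Pi.single i 1) i = M i i := by simp [Matrix.mulVec_single]
  have h2 : (∑ k, Complex.normSq ((Pi.single i 1 : Fin n → ℂ) k) : ℝ) = 1 := by
    rw [Finset.sum_eq_single i] <;> simp +contextual [Pi.single_apply]
  have h3 : Complex.normSq (M i i) ≤ 1 := by
    calc Complex.normSq (M i i) ≤ ∑ k, Complex.normSq (M.mulVec (Pi.single i 1) k) := by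
          rw [← h1]; exact Finset.single_le_sum (f := fun k => Complex.normSq (M.mulVec (Pi.single i 1) k)) (fun k _ => Complex.normSq_nonneg _) (Finset.mem_univ i)
      _ ≤ 1 := by rwa [h2] at h
  nlinarith [Complex.sq_norm (M i i), norm_nonneg (M i i)]

lemma sum_normSq_eq' (y : Fin n → ℂ) :
    (∑ i, Complex.normSq (y i) : ℝ) = (star y ⬝ᵥ y).re := by
  simp [dotProduct, ← Complex.normSq_eq_conj_mul_self, Complex.re_sum]

lemma eq_zero_of_star_dot (y : Fin n → ℂ) (hy : star y ⬝ᵥ y = 0) : y = 0 := by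
  have h := sum_normSq_eq' y
  rw [hy] at h
  simp only [Complex.zero_re] at h
  funext k
  have := (Finset.sum_eq_zero_iff_of_nonneg
    (fun i _ => Complex.normSq_nonneg (y i))).mp h k (Finset.mem_univ k)
  exact Complex.normSq_eq_zero.mp this

lemma unitary_of_cols (w : Fin n → (Fin n → ℂ))
    (hw : ∀ i j, star (w i) ⬝ᵥ w j = if i = j then 1 else 0) :
    Matrix.of (fun k i => w i k) ∈ Matrix.unitaryGroup (Fin n) ℂ := by
  rw [Matrix.mem_unitaryGroup_iff']
  ext i j
  rw [Matrix.star_eq_conjTranspose, Matrix.mul_apply]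
  have := hw i j
  simp only [dotProduct, Pi.star_apply] at this
  simpa [Matrix.conjTranspose_apply, Matrix.one_apply] using this

lemma exists_svd (A : Matrix (Fin n) (Fin n) ℂ) (d : Fin n → ℝ) (e : Equiv.Perm (Fin n))
    (hd : ∀ i, d i = singValues A (e i)) :
    ∃ V W : Matrix (Fin n) (Fin n) ℂ, V ∈ Matrix.unitaryGroup (Fin n) ℂ ∧
      W ∈ Matrix.unitaryGroup (Fin n) ℂ ∧
      A = V * Matrix.diagonal (fun i => (d i : ℂ)) * W := by
  classical
  set hH := (Matrix.posSemidef_conjTranspose_mul_self A).1 with hHdef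
  set μ : Fin n → ℝ := hH.eigenvalues with hμdef
  have hμ0 : ∀ i, 0 ≤ μ i := fun i =>
    (Matrix.posSemidef_conjTranspose_mul_self A).eigenvalues_nonneg i
  set u : Fin n → EuclideanSpace ℂ (Fin n) := fun i => hH.eigenvectorBasis i with hudef
  -- ⟪A u i, A u j⟫ = μ j δ_{ij}
  have horth : ∀ i j, star (u i) ⬝ᵥ (u j) = if i = j then 1 else 0 := by
    intro i j
    have := orthonormal_iff_ite.mp hH.eigenvectorBasis.orthonormal i j
    rw [EuclideanSpace.inner_eq_star_dotProduct, dotProduct_comm] at this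
    exact this
  have hAu : ∀ i j, star (A *ᵥ u i) ⬝ᵥ (A *ᵥ u j) = if i = j then (μ j : ℂ) else 0 := by
    intro i j
    have h1 : (Aᴴ * A) *ᵥ u j = (μ j : ℝ) • (u j) := hH.mulVec_eigenvectorBasis j
    rw [Matrix.star_mulVec, ← Matrix.dotProduct_mulVec, Matrix.mulVec_mulVec, h1]
    rw [dotProduct_smul, horth i j]
    by_cases h : i = j <;> simp [h, Complex.real_smul]
  -- the candidate left singular vectors
  set v : Fin n → EuclideanSpace ℂ (Fin n) :=
    fun i => WithLp.toLp 2 ((Real.sqrt (μ i) : ℂ)⁻¹ • (A *ᵥ u i) : Fin n → ℂ) with hvdef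
  have hv_orth : Orthonormal ℂ (Set.restrict {i | μ i ≠ 0} v) := by
    rw [orthonormal_iff_ite]
    intro ⟨i, hi⟩ ⟨j, hj⟩
    have hi' : (0:ℝ) < μ i := lt_of_le_of_ne (hμ0 i) (Ne.symm hi)
    have hj' : (0:ℝ) < μ j := lt_of_le_of_ne (hμ0 j) (Ne.symm hj)
    rw [EuclideanSpace.inner_eq_star_dotProduct]
    show ((Real.sqrt (μ j) : ℂ)⁻¹ • (A *ᵥ u j)) ⬝ᵥ star ((Real.sqrt (μ i) : ℂ)⁻¹ • (A *ᵥ u i)) = _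
    rw [dotProduct_comm, star_smul, smul_dotProduct, dotProduct_smul, hAu i j]
    by_cases h : i = j
    · subst h
      simp only [if_pos rfl, star_inv₀, Complex.star_def, Complex.conj_ofReal, smul_eq_mul]
      rw [if_true, if_true, ← mul_assoc, ← mul_inv, ← Complex.ofReal_mul,
        Real.mul_self_sqrt (hμ0 i)]
      exact inv_mul_cancel₀ (Complex.ofReal_ne_zero.mpr hi)
    · have : (⟨i,hi⟩ : {i | μ i ≠ 0}) ≠ ⟨j,hj⟩ := by simpa using h
      simp [h, this]
  obtain ⟨b, hb⟩ := hv_orth.exists_orthonormalBasis_extension_of_card_eq (by simp)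
  set C : Matrix (Fin n) (Fin n) ℂ := Matrix.of (fun k i => b i k) with hCdef
  set Eu : Matrix (Fin n) (Fin n) ℂ := Matrix.of (fun k i => u i k) with hEudef
  have hC : C ∈ Matrix.unitaryGroup (Fin n) ℂ := by
    apply unitary_of_cols
    intro i j
    have := orthonormal_iff_ite.mp b.orthonormal i j
    rwa [EuclideanSpace.inner_eq_star_dotProduct, dotProduct_comm] at this
  have hEu : Eu ∈ Matrix.unitaryGroup (Fin n) ℂ := unitary_of_cols (fun i => (u i).ofLp) horth
  have hg : ∀ i, singValues A i = Real.sqrt (μ i) := fun i => rfl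
  set g : Fin n → ℂ := fun i => (Real.sqrt (μ i) : ℂ) with hgdef
  -- main factorization
  have hfac : C * Matrix.diagonal g = A * Eu := by
    ext k i
    rw [Matrix.mul_diagonal, Matrix.mul_apply]
    have hRHS : ∑ l, A k l * Eu l i = (A *ᵥ u i) k := by
      simp [Matrix.mulVec, dotProduct, hEudef]
    rw [hRHS]
    by_cases h : μ i = 0
    · have h00 := hAu i i
      rw [if_pos rfl, h, Complex.ofReal_zero] at h00
      have h0 := eq_zero_of_star_dot _ h00
      have h0k : (A *ᵥ u i) k = 0 := by rw [h0]; rfl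
      simp [hCdef, hgdef, h, h0k]
    · have hbv : b i = v i := hb i h
      have hs : (Real.sqrt (μ i) : ℂ) ≠ 0 := by
        have : (0:ℝ) < μ i := lt_of_le_of_ne (hμ0 i) (Ne.symm h)
        exact_mod_cast Real.sqrt_ne_zero'.mpr this
      have hCk : C k i = (Real.sqrt (μ i) : ℂ)⁻¹ * (A *ᵥ u i) k := by
        simp only [hCdef, Matrix.of_apply, hbv, hvdef]
        rfl
      rw [hCk, hgdef]
      field_simp
  have hEu2 : Eu * star Eu = 1 := Matrix.mem_unitaryGroup_iff.mp hEu
  have hA : A = C * Matrix.diagonal g * star Eu := by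
    rw [hfac, Matrix.mul_assoc, hEu2, Matrix.mul_one]
  -- now permute
  refine ⟨C.submatrix id ⇑e, (star Eu).submatrix ⇑e id, ?_, ?_, ?_⟩
  · rw [Matrix.mem_unitaryGroup_iff']
    rw [Matrix.star_eq_conjTranspose, Matrix.conjTranspose_submatrix,
      ← Matrix.star_eq_conjTranspose]
    have := Matrix.submatrix_mul_equiv (star C) C ⇑e (Equiv.refl (Fin n)) ⇑e
    simp only [Equiv.coe_refl] at this
    rw [this, Matrix.mem_unitaryGroup_iff'.mp hC, Matrix.submatrix_one_equiv]
  · rw [Matrix.mem_unitaryGroup_iff']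
    rw [Matrix.star_eq_conjTranspose, Matrix.conjTranspose_submatrix]
    have hEuHH : (star Eu)ᴴ = Eu := by
      rw [Matrix.star_eq_conjTranspose, Matrix.conjTranspose_conjTranspose]
    rw [hEuHH, Matrix.submatrix_mul_equiv Eu (star Eu) id e id, hEu2,
      Matrix.submatrix_id_id]
  · have hdg : (fun i => ((d i : ℝ) : ℂ)) = fun i => g (e i) := by
      funext i
      rw [hd i, hg (e i)]
    have hds : Matrix.diagonal (fun i => g (e i)) = (Matrix.diagonal g).submatrix ⇑e ⇑e := by
      ext i j
      by_cases h : i = j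
      · subst h; simp
      · have : e i ≠ e j := fun hc => h (e.injective hc)
        simp [Matrix.diagonal_apply_ne _ h, Matrix.diagonal_apply_ne _ this]
    rw [hdg, hds, Matrix.submatrix_mul_equiv C (Matrix.diagonal g) id e ⇑e,
      Matrix.submatrix_mul_equiv (C * Matrix.diagonal g) (star Eu) id e id,
      Matrix.submatrix_id_id, hA]

lemma listProd_smul {m : ℕ} (r : Fin m → ℝ) (M : Fin m → Matrix (Fin n) (Fin n) ℂ) :
    (List.ofFn fun j => r j • M j).prod = (∏ j, r j) • (List.ofFn M).prod := by
  induction m with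
  | zero => simp
  | succ m ih =>
    rw [List.ofFn_succ, List.ofFn_succ, List.prod_cons, List.prod_cons,
      ih (fun j => r j.succ) (fun j => M j.succ), Fin.prod_univ_succ,
      smul_mul_smul_comm]

lemma listProd_sum {N : ℕ} : ∀ {m : ℕ} (f : Fin m → Fin N → Matrix (Fin n) (Fin n) ℂ),
    (List.ofFn fun j => ∑ k, f j k).prod
      = ∑ K : Fin m → Fin N, (List.ofFn fun j => f j (K j)).prod := by
  intro m
  induction m with
  | zero => intro f; simp
  | succ m ih =>
    intro f
    have he := Equiv.sum_comp (Fin.consEquiv (fun _ : Fin (m+1) => Fin N))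
      (fun K => (List.ofFn fun j => f j (K j)).prod)
    rw [List.ofFn_succ, List.prod_cons, ih (fun j k => f j.succ k), Finset.sum_mul,
      ← he, Fintype.sum_prod_type]
    refine Finset.sum_congr rfl fun k _ => ?_
    rw [Finset.mul_sum]
    refine Finset.sum_congr rfl fun K _ => ?_
    rw [List.ofFn_succ, List.prod_cons]
    simp [Fin.consEquiv]

/-- diagonal projection onto the first coordinates up to `k`. -/
def Pmat (k : Fin n) : Matrix (Fin n) (Fin n) ℂ :=
  Matrix.diagonal (fun i => if i ≤ k then 1 else 0)

lemma isContr_Pmat (k : Fin n) : IsContr (Pmat k) := by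
  intro x
  refine Finset.sum_le_sum fun i _ => ?_
  rw [Pmat, Matrix.mulVec_diagonal]
  by_cases h : i ≤ k <;> simp [h, Complex.normSq_nonneg]

lemma trace_Pmat_mul (k : Fin n) (B : Matrix (Fin n) (Fin n) ℂ)
    (hB : ∀ i, ‖B i i‖ ≤ 1) :
    ‖(Pmat k * B).trace‖ ≤ ((Finset.univ.filter fun i : Fin n => i ≤ k).card : ℝ) := by
  have ht : (Pmat k * B).trace = ∑ i ∈ Finset.univ.filter (fun i : Fin n => i ≤ k), B i i := by
    rw [Matrix.trace, Finset.sum_filter]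
    refine Finset.sum_congr rfl fun i _ => ?_
    rw [Matrix.diag_apply, Pmat, Matrix.diagonal_mul, boole_mul]
  rw [ht]
  calc ‖∑ i ∈ Finset.univ.filter (fun i : Fin n => i ≤ k), B i i‖
      ≤ ∑ i ∈ Finset.univ.filter (fun i : Fin n => i ≤ k), ‖B i i‖ :=
        norm_sum_le _ _
    _ ≤ ∑ i ∈ Finset.univ.filter (fun i : Fin n => i ≤ k), 1 := Finset.sum_le_sum fun i _ => hB i
    _ = _ := by simp

/-- coefficient in the layer-cake decomposition. -/
def cc (d : Fin n → ℝ) (k : Fin n) : ℝ :=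
  d k - (if h : (k:ℕ)+1 < n then d ⟨(k:ℕ)+1, h⟩ else 0)

lemma cc_nonneg {d : Fin n → ℝ} (hd : Antitone d) (h0 : ∀ i, 0 ≤ d i) (k : Fin n) :
    0 ≤ cc d k := by
  rw [cc]
  split_ifs with h
  · have : k ≤ (⟨(k:ℕ)+1, h⟩ : Fin n) := by
      rw [Fin.le_def]; exact Nat.le_succ _
    linarith [hd this]
  · linarith [h0 k]

lemma telescope (d : Fin n → ℝ) (i : Fin n) :
    ∑ k : Fin n, (if i ≤ k then cc d k else 0) = d i := by
  set τ : ℕ → ℝ := fun k => if h : k < n then d ⟨k, h⟩ else 0 with hτ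
  have h1 : ∀ k : Fin n, d k = τ (k : ℕ) := fun k => by simp [hτ, k.isLt]
  have hFk : ∀ k : Fin n, (if i ≤ k then cc d k else 0)
      = (fun k : ℕ => if (i:ℕ) ≤ k then τ k - τ (k+1) else 0) (k : ℕ) := by
    intro k
    have hcc : cc d k = τ (k:ℕ) - τ ((k:ℕ)+1) := by
      rw [cc, ← h1, hτ]
    by_cases h : i ≤ k
    · rw [if_pos h]
      simp only
      rw [if_pos (Fin.le_def.mp h), hcc]
    · rw [if_neg h]
      simp only
      rw [if_neg (fun hc => h (Fin.le_def.mpr hc))]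
  calc ∑ k : Fin n, (if i ≤ k then cc d k else 0)
      = ∑ k : Fin n, (fun k : ℕ => if (i:ℕ) ≤ k then τ k - τ (k+1) else 0) (k:ℕ) :=
        Finset.sum_congr rfl fun k _ => hFk k
    _ = ∑ k ∈ Finset.range n, (if (i:ℕ) ≤ k then τ k - τ (k+1) else 0) :=
        by exact Fin.sum_univ_eq_sum_range (fun k : ℕ => if (i:ℕ) ≤ k then τ k - τ (k+1) else 0) n
    _ = ∑ k ∈ (Finset.range n).filter (fun k => (i:ℕ) ≤ k), (τ k - τ (k+1)) :=
        (Finset.sum_filter _ _).symm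
    _ = ∑ k ∈ Finset.Ico (i:ℕ) n, (τ k - τ (k+1)) := by
        congr 1
        ext k
        simp [Finset.mem_filter, Finset.mem_Ico, and_comm]
    _ = d i := by
        rw [Finset.sum_Ico_eq_sub _ (le_of_lt i.isLt), Finset.sum_range_sub' τ,
          Finset.sum_range_sub' τ]
        have hn : τ n = 0 := by simp [hτ]
        rw [hn, h1 i]
        ring

lemma diag_expand (d : Fin n → ℝ) :
    Matrix.diagonal (fun i => (d i : ℂ)) = ∑ k : Fin n, cc d k • Pmat k := by
  ext i i'
  rw [Matrix.sum_apply]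
  by_cases h : i = i'
  · subst h
    rw [Matrix.diagonal_apply_eq]
    have : ∀ k : Fin n, (cc d k • Pmat k) i i = ((if i ≤ k then cc d k else 0 : ℝ) : ℂ) := by
      intro k
      rw [Matrix.smul_apply, Pmat, Matrix.diagonal_apply_eq]
      by_cases hik : i ≤ k <;> simp [hik, Complex.real_smul]
    rw [Finset.sum_congr rfl fun k _ => this k, ← Complex.ofReal_sum, telescope]
  · rw [Matrix.diagonal_apply_ne _ h]
    refine (Finset.sum_eq_zero fun k _ => ?_).symm
    rw [Matrix.smul_apply, Pmat, Matrix.diagonal_apply_ne _ h, smul_zero]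


lemma key_lemma {m : ℕ} (d : Fin m → Fin n → ℝ) (hmono : ∀ j, Antitone (d j))
    (h0 : ∀ j i, 0 ≤ d j i) (V W : Fin m → Matrix (Fin n) (Fin n) ℂ)
    (hV : ∀ j, IsContr (V j)) (hW : ∀ j, IsContr (W j)) :
    ‖(List.ofFn fun j =>
        V j * Matrix.diagonal (fun i => (d j i : ℂ)) * W j).prod.trace‖
      ≤ ∑ i : Fin n, ∏ j : Fin m, d j i := by
  rcases Nat.eq_zero_or_pos m with hm | hm
  · subst hm
    simp [Matrix.trace_one]
  have hexp : ∀ j, V j * Matrix.diagonal (fun i => (d j i : ℂ)) * W j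
      = ∑ k : Fin n, cc (d j) k • (V j * Pmat k * W j) := by
    intro j
    rw [diag_expand (d j), Finset.mul_sum, Finset.sum_mul]
    refine Finset.sum_congr rfl fun k _ => ?_
    rw [Matrix.mul_smul, Matrix.smul_mul]
  have hlist : (List.ofFn fun j => V j * Matrix.diagonal (fun i => (d j i : ℂ)) * W j)
      = List.ofFn fun j => ∑ k : Fin n, cc (d j) k • (V j * Pmat k * W j) := by
    congr 1
    funext j
    exact hexp j
  rw [hlist, listProd_sum]
  have step1 : (∑ K : Fin m → Fin n,
        (List.ofFn fun j => cc (d j) (K j) • (V j * Pmat (K j) * W j)).prod).trace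
      = ∑ K : Fin m → Fin n, (∏ j, cc (d j) (K j))
          • ((List.ofFn fun j => V j * Pmat (K j) * W j).prod).trace := by
    rw [Matrix.trace_sum]
    exact Finset.sum_congr rfl fun K _ => by rw [listProd_smul, Matrix.trace_smul]
  rw [step1]
  have hccnn : ∀ (K : Fin m → Fin n), 0 ≤ ∏ j, cc (d j) (K j) := fun K =>
    Finset.prod_nonneg fun j _ => cc_nonneg (hmono j) (h0 j) (K j)
  have hbound : ∀ K : Fin m → Fin n,
      ‖(List.ofFn fun j => V j * Pmat (K j) * W j).prod.trace‖
        ≤ ((Finset.univ.filter fun i : Fin n => ∀ j, i ≤ K j).card : ℝ) := by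
    intro K
    obtain ⟨j₀, -, hj₀⟩ := Finset.exists_min_image Finset.univ K
      ⟨⟨0, hm⟩, Finset.mem_univ _⟩
    set l := List.ofFn fun j => V j * Pmat (K j) * W j with hl
    have hlen : l.length = m := by simp [hl]
    have hmem : ∀ M ∈ l, IsContr M := by
      intro M hM
      rw [hl, List.mem_ofFn] at hM
      obtain ⟨j, rfl⟩ := hM
      exact ((hV j).mul (isContr_Pmat _)).mul (hW j)
    have hsplit : l = l.take (j₀:ℕ) ++ l.drop (j₀:ℕ) := (List.take_append_drop _ _).symm
    have hj₀lt : (j₀:ℕ) < l.length := by rw [hlen]; exact j₀.isLt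
    have hdrop : l.drop (j₀:ℕ)
        = (V j₀ * Pmat (K j₀) * W j₀) :: l.drop ((j₀:ℕ)+1) := by
      rw [List.drop_eq_getElem_cons hj₀lt]
      congr 1
      simp [hl]
    set R : Matrix (Fin n) (Fin n) ℂ := (l.drop ((j₀:ℕ)+1)).prod * (l.take (j₀:ℕ)).prod
      with hR
    have htr : l.prod.trace = (Pmat (K j₀) * (W j₀ * R * V j₀)).trace := by
      conv_lhs => rw [hsplit]
      rw [List.prod_append, Matrix.trace_mul_comm, hdrop, List.prod_cons, Matrix.mul_assoc,
        ← hR]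
      rw [show (V j₀ * Pmat (K j₀) * W j₀) * R = V j₀ * (Pmat (K j₀) * (W j₀ * R)) by
        rw [Matrix.mul_assoc, Matrix.mul_assoc]]
      rw [Matrix.trace_mul_comm]
      congr 1
      simp only [Matrix.mul_assoc]
    have hB : IsContr (W j₀ * R * V j₀) := by
      have h1 : IsContr R := by
        apply IsContr.mul
        · exact IsContr.prod fun M hM => hmem M (List.drop_subset _ _ hM)
        · exact IsContr.prod fun M hM => hmem M (List.take_subset _ _ hM)
      exact ((hW j₀).mul h1).mul (hV j₀)
    rw [htr]
    refine (trace_Pmat_mul (K j₀) _ (fun i => hB.diag_abs_le i)).trans ?_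
    have hcard : (Finset.univ.filter fun i : Fin n => i ≤ K j₀)
        = (Finset.univ.filter fun i : Fin n => ∀ j, i ≤ K j) := by
      ext i
      simp only [Finset.mem_filter, Finset.mem_univ, true_and]
      exact ⟨fun h j => le_trans h (hj₀ j (Finset.mem_univ j)), fun h => h j₀⟩
    rw [hcard]
  have key : ∑ K : Fin m → Fin n, (∏ j, cc (d j) (K j))
        * ((Finset.univ.filter fun i : Fin n => ∀ j, i ≤ K j).card : ℝ)
      = ∑ i : Fin n, ∏ j, d j i := by
    have h1 : ∀ K : Fin m → Fin n, (∏ j, cc (d j) (K j))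
        * ((Finset.univ.filter fun i : Fin n => ∀ j, i ≤ K j).card : ℝ)
        = ∑ i : Fin n, ∏ j, (cc (d j) (K j) * if i ≤ K j then 1 else 0) := by
      intro K
      have hc : ((Finset.univ.filter fun i : Fin n => ∀ j, i ≤ K j).card : ℝ)
          = ∑ i : Fin n, (if ∀ j, i ≤ K j then (1:ℝ) else 0) := by
        rw [Finset.card_filter]
        push_cast
        rfl
      rw [hc, Finset.mul_sum]
      refine Finset.sum_congr rfl fun i _ => ?_
      rw [Finset.prod_mul_distrib, Finset.prod_boole]
      simp
    rw [Finset.sum_congr rfl fun K _ => h1 K, Finset.sum_comm]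
    refine Finset.sum_congr rfl fun i _ => ?_
    have h2 : ∀ j : Fin m, d j i = ∑ k : Fin n, (cc (d j) k * if i ≤ k then 1 else 0) := by
      intro j
      rw [← telescope (d j) i]
      exact Finset.sum_congr rfl fun k _ => by by_cases h : i ≤ k <;> simp [h]
    rw [Finset.prod_congr rfl fun j _ => h2 j, Finset.prod_univ_sum]
    rw [Fintype.piFinset_univ]
  calc ‖∑ K : Fin m → Fin n, (∏ j, cc (d j) (K j))
          • ((List.ofFn fun j => V j * Pmat (K j) * W j).prod).trace‖
      ≤ ∑ K : Fin m → Fin n, ‖(∏ j, cc (d j) (K j))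
          • ((List.ofFn fun j => V j * Pmat (K j) * W j).prod).trace‖ :=
        norm_sum_le _ _
    _ = ∑ K : Fin m → Fin n, (∏ j, cc (d j) (K j))
          * ‖((List.ofFn fun j => V j * Pmat (K j) * W j).prod).trace‖ := by
        refine Finset.sum_congr rfl fun K _ => ?_
        rw [Complex.real_smul, norm_mul, Complex.norm_real, Real.norm_eq_abs, abs_of_nonneg (hccnn K)]
    _ ≤ ∑ K : Fin m → Fin n, (∏ j, cc (d j) (K j))
          * ((Finset.univ.filter fun i : Fin n => ∀ j, i ≤ K j).card : ℝ) :=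
        Finset.sum_le_sum fun K _ => mul_le_mul_of_nonneg_left (hbound K) (hccnn K)
    _ = ∑ i : Fin n, ∏ j, d j i := key

/-- Generalized von Neumann trace inequality (Ky Fan): for square matrices
`A₁,…,A_m` and unitaries `U₁,…,U_m`,
`|Tr(A₁U₁A₂U₂⋯A_mU_m)| ≤ Σ_i σ_i(A₁)⋯σ_i(A_m)`, where for each `j`,
`σ j : Fin n → ℝ` is the decreasing rearrangement of the singular values of
`A j`. -/
theorem fan_trace_inequality {n m : ℕ}
    (A : Fin m → Matrix (Fin n) (Fin n) ℂ)
    (U : Fin m → Matrix.unitaryGroup (Fin n) ℂ)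
    (σ : Fin m → Fin n → ℝ)
    (hsort : ∀ j, Antitone (σ j))
    (hperm : ∀ j, ∃ e : Equiv.Perm (Fin n), ∀ i, σ j i = singValues (A j) (e i)) :
    ‖(List.ofFn (fun j => A j * (U j : Matrix (Fin n) (Fin n) ℂ))).prod.trace‖
      ≤ ∑ i : Fin n, ∏ j : Fin m, σ j i := by
  have hsvd : ∀ j, ∃ V W : Matrix (Fin n) (Fin n) ℂ,
      V ∈ Matrix.unitaryGroup (Fin n) ℂ ∧ W ∈ Matrix.unitaryGroup (Fin n) ℂ ∧
      A j = V * Matrix.diagonal (fun i => (σ j i : ℂ)) * W := by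
    intro j
    obtain ⟨e, he⟩ := hperm j
    exact exists_svd (A j) (σ j) e he
  choose V W hVu hWu hfac using hsvd
  have hnn : ∀ j i, 0 ≤ σ j i := by
    intro j i
    obtain ⟨e, he⟩ := hperm j
    rw [he i]
    exact Real.sqrt_nonneg _
  have hlist : (List.ofFn fun j => A j * (U j : Matrix (Fin n) (Fin n) ℂ))
      = List.ofFn fun j => V j * Matrix.diagonal (fun i => (σ j i : ℂ))
          * (W j * (U j : Matrix (Fin n) (Fin n) ℂ)) := by
    congr 1
    funext j
    rw [hfac j, Matrix.mul_assoc]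
  rw [hlist]
  exact key_lemma σ hsort hnn V (fun j => W j * (U j : Matrix (Fin n) (Fin n) ℂ))
    (fun j => IsContr.of_unitary (hVu j))
    (fun j => (IsContr.of_unitary (hWu j)).mul (IsContr.of_unitary (U j).2))
end
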